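/- Let k ≥ 1 and let (G,σ) be a signed graph whose underlying graph G is bipartite. Then (G,σ) admits a homomorphism to (K_{k,k},M) if and only if (G,σ) admits a homomorphism to (K_{2k},M). -/

import Mathlib

open SimpleGraph

/-- The sign of a walk in a signed graph `(G, σ)`: the product of the signs of its edges,
counted with multiplicity. -/
def walkSign {V : Type*} {G : SimpleGraph V} (σ : Sym2 V → ℤˣ) {u v : V}
    (w : G.Walk u v) : ℤˣ :=
  (w.edges.map σ).prod

/-- A homomorphism of signed graphs: a graph homomorphism which preserves the signs of
closed walks. -/
def IsSignedHom {U V : Type*} (G : SimpleGraph U) (σ : Sym2 U → ℤˣ)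
    (H : SimpleGraph V) (π : Sym2 V → ℤˣ) (f : G →g H) : Prop :=
  ∀ (u : U) (w : G.Walk u u), walkSign π (w.map f) = walkSign σ w

/-- `(G, σ)` admits a homomorphism to `(H, π)`. -/
def SignedHom {U V : Type*} (G : SimpleGraph U) (σ : Sym2 U → ℤˣ)
    (H : SimpleGraph V) (π : Sym2 V → ℤˣ) : Prop :=
  ∃ f : G →g H, IsSignedHom G σ H π f

/-- The signature on the complete graph `K_n` (with `n` even, vertices `0, …, n-1`) whose
negative edges form the perfect matching `{01, 23, 45, …}`: the edge `uv` is negative iff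
`u` and `v` lie in the same matched pair, i.e. `⌊u/2⌋ = ⌊v/2⌋`. -/
def matchSign (n : ℕ) : Sym2 (Fin n) → ℤˣ :=
  Sym2.lift ⟨fun a b => if (a : ℕ) / 2 = (b : ℕ) / 2 then -1 else 1, by
    intro a b
    simp only [eq_comm]⟩

/-- The signed complete bipartite graph `(K_{k,k}, M)`: both parts are copies of `Fin k`, every
left vertex is adjacent to every right vertex, and the edge between `inl i` and `inr j` is
negative iff `i = j` (the perfect matching `M`). -/
def kkkSign (k : ℕ) : Sym2 (Fin k ⊕ Fin k) → ℤˣ :=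
  Sym2.lift ⟨fun a b => if Sum.elim id id a = Sum.elim id id b then -1 else 1, by
    intro a b
    simp only [eq_comm]⟩


/-- Comparing walk signs under two different homomorphisms whose edge signs agree. -/
lemma walkSign_congr_map {U A B : Type*} {G : SimpleGraph U} {H : SimpleGraph A}
    {H' : SimpleGraph B} (f : G →g H) (g : G →g H') (π : Sym2 A → ℤˣ) (π' : Sym2 B → ℤˣ)
    (he : ∀ {u v : U}, G.Adj u v → π' s(g u, g v) = π s(f u, f v))
    {a b : U} (w : G.Walk a b) : walkSign π' (w.map g) = walkSign π (w.map f) := by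
  induction w with
  | nil => rfl
  | cons h p ih =>
    simp only [Walk.map_cons, walkSign, Walk.edges_cons, List.map_cons, List.prod_cons] at *
    rw [he h, ih]

def embKK (k : ℕ) : Fin k ⊕ Fin k → Fin (2 * k) :=
  Sum.elim (fun i => ⟨2 * i, by have := i.2; omega⟩) (fun i => ⟨2 * i + 1, by have := i.2; omega⟩)

lemma sign_embKK {k : ℕ} (a b : Fin k ⊕ Fin k)
    (h : (completeBipartiteGraph (Fin k) (Fin k)).Adj a b) :
    matchSign (2 * k) s(embKK k a, embKK k b) = kkkSign k s(a, b) := by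
  rcases a with i | i <;> rcases b with j | j
  · simp at h
  · simp only [matchSign, kkkSign, embKK, Sym2.lift_mk, Sum.elim_inl, Sum.elim_inr, id_eq]
    rcases eq_or_ne i j with rfl | hne
    · rw [if_pos (by omega)]; exact (if_pos rfl).symm
    · have hval : (i : ℕ) ≠ (j : ℕ) := fun h => hne (Fin.ext h)
      rw [if_neg (by omega)]; exact (if_neg hne).symm
  · simp only [matchSign, kkkSign, embKK, Sym2.lift_mk, Sum.elim_inl, Sum.elim_inr, id_eq]
    rcases eq_or_ne i j with rfl | hne
    · rw [if_pos (by omega)]; exact (if_pos rfl).symm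
    · have hval : (i : ℕ) ≠ (j : ℕ) := fun h => hne (Fin.ext h)
      rw [if_neg (by omega)]; exact (if_neg hne).symm
  · simp at h

def embHomKK (k : ℕ) :
    completeBipartiteGraph (Fin k) (Fin k) →g (⊤ : SimpleGraph (Fin (2 * k))) where
  toFun := embKK k
  map_rel' := by
    intro a b h
    rcases a with i | i <;> rcases b with j | j
    · simp at h
    · simp only [top_adj, ne_eq]
      intro he
      have := congrArg Fin.val he
      simp only [embKK, Sum.elim_inl, Sum.elim_inr] at this
      omega
    · simp only [top_adj, ne_eq]
      intro he
      have := congrArg Fin.val he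
      simp only [embKK, Sum.elim_inl, Sum.elim_inr] at this
      omega
    · simp at h

/-- A signed bipartite graph maps to `(K_{k,k}, M)` iff it maps to `(K_{2k}, M)`. -/
theorem signedHom_kkk_iff_signedHom_k2k {V : Type*} (k : ℕ) (hk : 1 ≤ k)
    (G : SimpleGraph V) (σ : Sym2 V → ℤˣ) (hbip : G.Colorable 2) :
    SignedHom G σ (completeBipartiteGraph (Fin k) (Fin k)) (kkkSign k) ↔
      SignedHom G σ (⊤ : SimpleGraph (Fin (2 * k))) (matchSign (2 * k)) := by
  constructor
  · rintro ⟨f, hf⟩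
    refine ⟨(embHomKK k).comp f, fun u w => ?_⟩
    have h1 : walkSign (matchSign (2 * k)) (w.map ((embHomKK k).comp f))
        = walkSign (kkkSign k) (w.map f) :=
      walkSign_congr_map f ((embHomKK k).comp f) (kkkSign k) (matchSign (2 * k))
        (fun {u v} huv => sign_embKK (f u) (f v) (f.map_adj huv)) w
    rw [h1, hf u w]
  · rintro ⟨f, hf⟩
    obtain ⟨C⟩ := hbip
    have hlt : ∀ v : V, ((f v : ℕ)) / 2 < k := fun v => by have := (f v).2; omega
    let g : V → Fin k ⊕ Fin k := fun v =>
      if C v = 0 then Sum.inl ⟨(f v : ℕ) / 2, hlt v⟩ else Sum.inr ⟨(f v : ℕ) / 2, hlt v⟩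
    have hg : ∀ {u v : V}, G.Adj u v →
        (completeBipartiteGraph (Fin k) (Fin k)).Adj (g u) (g v) := by
      intro u v huv
      have hC := C.valid huv
      by_cases hu : C u = 0
      · have hv : ¬ C v = 0 := fun h => hC (h ▸ hu)
        simp [g, hu, hv, completeBipartiteGraph]
      · have hv : C v = 0 := by omega
        simp [g, hu, hv, completeBipartiteGraph]
    let gh : G →g completeBipartiteGraph (Fin k) (Fin k) := ⟨g, fun h => hg h⟩
    refine ⟨gh, fun u w => ?_⟩
    have hedge : ∀ {u v : V}, G.Adj u v →
        kkkSign k s(gh u, gh v) = matchSign (2 * k) s(f u, f v) := by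
      intro u v huv
      have h2 : C u ≠ C v := C.valid huv
      have e1 : gh u = g u := rfl
      have e2 : gh v = g v := rfl
      rw [e1, e2]
      have hc : ((⟨(f u : ℕ) / 2, hlt u⟩ : Fin k) = ⟨(f v : ℕ) / 2, hlt v⟩)
          ↔ ((f u : ℕ) / 2 = (f v : ℕ) / 2) := Fin.ext_iff
      by_cases hu : C u = 0 <;> by_cases hv : C v = 0
      · exact absurd (hu.trans hv.symm) h2
      · simp only [g, if_pos hu, if_neg hv]
        simp [kkkSign, matchSign, hc]
      · simp only [g, if_neg hu, if_pos hv]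
        simp [kkkSign, matchSign, hc]
      · exfalso; omega
    have h1 := walkSign_congr_map f gh (matchSign (2 * k)) (kkkSign k)
      (fun {u v} huv => hedge huv) w
    rw [h1, hf u w]
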